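/- Assume k has characteristic l. Let I : C_c^∞(X, k) → k be a k-linear functional that is γ-invariant, i.e., I(γ·f) = I(f) for all f ∈ C_c^∞(X, k). Then I(φ) = 0 for every γ-invariant function φ ∈ C_c^∞(X, k) that vanishes identically on the fixed-point set X^γ. -/

import Mathlib

open Function Set

/-- The space `C_c^∞(X, k)` of locally constant, compactly supported `k`-valued
functions on `X`, as a `k`-submodule of `X → k`. -/
def Ccinf (X : Type*) [TopologicalSpace X] (k : Type*) [Field k] :
    Submodule k (X → k) where
  carrier := {f | IsLocallyConstant f ∧ HasCompactSupport f}
  add_mem' := fun hf hg => ⟨hf.1.comp₂ hg.1 (· + ·), hf.2.add hg.2⟩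
  zero_mem' := ⟨IsLocallyConstant.const 0, by
    simp [HasCompactSupport, tsupport, Function.support_zero]⟩
  smul_mem' := fun c f hf =>
    ⟨hf.1.comp (c • ·), hf.2.mono (Function.support_const_smul_subset c f)⟩

variable {X : Type*} [TopologicalSpace X] {k : Type*} [Field k]

/-- The action of a homeomorphism `γ` on `C_c^∞(X, k)`, given by
`(γ · f)(x) = f (γ⁻¹ x)`, as a `k`-linear endomorphism. -/
def gammaT (γ : X ≃ₜ X) : Ccinf X k →ₗ[k] Ccinf X k where
  toFun f := ⟨fun x => (f : X → k) (γ.symm x),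
    f.2.1.comp_continuous γ.symm.continuous,
    f.2.2.comp_isClosedEmbedding γ.symm.isClosedEmbedding⟩
  map_add' f g := by ext x; rfl
  map_smul' c f := by ext x; rfl

/-- Restriction of functions in `C_c^∞(X, k)` to the (closed) fixed-point set
`X^γ = {x : X // γ x = x}`, as a `k`-linear map to `C_c^∞(X^γ, k)`. -/
def resL (γ : X ≃ₜ X) [T2Space X] :
    Ccinf X k →ₗ[k] Ccinf {x : X // γ x = x} k where
  toFun f := ⟨fun y => (f : X → k) y.1,
    f.2.1.comp_continuous continuous_subtype_val,
    f.2.2.comp_isClosedEmbedding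
      ((isClosed_eq γ.continuous continuous_id).isClosedEmbedding_subtypeVal)⟩
  map_add' f g := by ext x; rfl
  map_smul' c f := by ext x; rfl

/-- The norm operator `N = ∑_{i=0}^{l-1} γ^i` on `C_c^∞(X, k)`. -/
def normOp (γ : X ≃ₜ X) (l : ℕ) : Module.End k (Ccinf X k) :=
  ∑ i ∈ Finset.range l, gammaT γ ^ i

/-- Auxiliary: a "fundamental domain" built from a list of sets, where `T S`
is the orbit-saturation of `S`. -/
def fundList {X : Type*} (T : Set X -> Set X) : List (Set X) -> Set X
  | [] => ∅
  | U :: L => U ∪ (fundList T L \ T U)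

/-- Let `γ` be a homeomorphism, of order dividing the prime `l`, of a locally compact,
Hausdorff, totally disconnected, second countable space `X`, and let `k` be a field of
characteristic `l`. If `I : C_c^∞(X, k) → k` is a `γ`-invariant `k`-linear functional,
then `I(φ) = 0` for every `γ`-invariant `φ ∈ C_c^∞(X, k)` vanishing on the fixed-point
set `X^γ`. -/
theorem invariant_functional_vanishes
    (l : ℕ) (hl : l.Prime)
    (X : Type*) [TopologicalSpace X] [LocallyCompactSpace X] [T2Space X]
    [TotallyDisconnectedSpace X] [SecondCountableTopology X]
    (γ : X ≃ₜ X) (hγl : ∀ x, (⇑γ)^[l] x = x)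
    (k : Type*) [Field k] [CharP k l]
    (I : Ccinf X k →ₗ[k] k) (hI : ∀ f : Ccinf X k, I (gammaT γ f) = I f)
    (φ : Ccinf X k) (hφinv : gammaT γ φ = φ)
    (hφvan : ∀ x : X, γ x = x → (φ : X → k) x = 0) :
    I φ = 0 := by
  classical
  have htots : TotallySeparatedSpace X := loc_compact_t2_tot_disc_iff_tot_sep.mp inferInstance
  have hlpos : 0 < l := hl.pos
  set s : X → X := ⇑γ.symm with hs
  have hscont : Continuous s := γ.symm.continuous
  have hsinj : Function.Injective s := γ.symm.injective
  have hsl : ∀ y, s^[l] y = y := by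
    intro y
    have h1 : Function.LeftInverse s ⇑γ := γ.symm_apply_apply
    have h2 := (h1.iterate l) y
    rwa [hγl y] at h2
  have hsmod : ∀ (a : ℕ) (y : X), s^[a] y = s^[a % l] y := by
    intro a y
    conv_lhs => rw [← Nat.mod_add_div a l, Function.iterate_add_apply]
    congr 1
    rw [Function.iterate_mul]
    exact Function.iterate_fixed (hsl y) _
  have hiter : ∀ (a b : ℕ) (y : X), s^[a] (s^[b] y) = s^[(a + b) % l] y := by
    intro a b y
    rw [← Function.iterate_add_apply, hsmod]
  have hφs : ∀ y, (φ : X → k) (s y) = (φ : X → k) y := by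
    intro y
    exact congrFun (congrArg Subtype.val hφinv) y
  have hφsi : ∀ (i : ℕ) (y : X), (φ : X → k) (s^[i] y) = (φ : X → k) y := by
    intro i
    induction i with
    | zero => intro y; rfl
    | succ n ih => intro y; rw [Function.iterate_succ_apply, ih, hφs]
  have hfix : ∀ y : X, (φ : X → k) y ≠ 0 → s y ≠ y := by
    intro y hy hsy
    apply hy
    apply hφvan
    calc γ y = γ (s y) := by rw [hsy]
      _ = y := γ.apply_symm_apply y
  have hkey : ∀ z : X, s z ≠ z → ∀ m, 0 < m → m < l → s^[m] z ≠ z := by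
    intro z hz m hm0 hml hmz
    have hndvd : ¬ l ∣ m := fun hdvd => absurd (Nat.le_of_dvd hm0 hdvd) (not_le.mpr hml)
    have hcop : Nat.Coprime m l := ((Nat.Prime.coprime_iff_not_dvd hl).mpr hndvd).symm
    obtain ⟨t, -, ht⟩ := Nat.exists_mul_mod_eq_one_of_coprime hcop hl.one_lt
    have h1 : s^[m * t] z = z := by
      rw [Function.iterate_mul]
      exact Function.iterate_fixed hmz t
    rw [hsmod, ht] at h1
    exact hz (by rwa [Function.iterate_one] at h1)
  have hfixiter : ∀ y : X, s y ≠ y → ∀ i, s (s^[i] y) ≠ s^[i] y := by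
    intro y hy i h
    apply hy
    apply Function.Injective.iterate hsinj i
    rw [← Function.iterate_succ_apply, Function.iterate_succ_apply']
    exact h
  have hfree : ∀ y : X, s y ≠ y → ∀ i j, i < l → j < l → s^[i] y = s^[j] y → i = j := by
    intro y hy i j hi hj hij
    rcases Nat.lt_trichotomy i j with h | h | h
    · exfalso
      have hz := hfixiter y hy i
      have heq : s^[j - i] (s^[i] y) = s^[i] y := by
        rw [← Function.iterate_add_apply]
        have h2 : j - i + i = j := by omega
        rw [h2, ← hij]
      exact hkey _ hz (j - i) (by omega) (by omega) heq
    · exact h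
    · exfalso
      have hz := hfixiter y hy j
      have heq : s^[i - j] (s^[j] y) = s^[j] y := by
        rw [← Function.iterate_add_apply]
        have h2 : i - j + j = i := by omega
        rw [h2, hij]
      exact hkey _ hz (i - j) (by omega) (by omega) heq
  -- the support of φ
  set Kphi : Set X := Function.support (φ : X → k) with hK
  have hφlc : IsLocallyConstant (φ : X → k) := φ.2.1
  have hKclosed : IsClosed Kphi := by
    have h1 : Kphiᶜ = (φ : X → k) ⁻¹' {0} := by
      ext y
      simp [hK, Function.mem_support]
    rw [← isOpen_compl_iff, h1]
    exact hφlc {0}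
  have hKcpt : IsCompact Kphi := by
    have h2 := φ.2.2
    rwa [HasCompactSupport, tsupport, hKclosed.closure_eq] at h2
  -- for each point of the support, a clopen neighborhood whose translates are disjoint
  have hUx : ∀ x : X, x ∈ Kphi → ∃ U : Set X, IsClopen U ∧ x ∈ U ∧
      ∀ z a b, a < l → b < l → s^[a] z ∈ U → s^[b] z ∈ U → a = b := by
    intro x hx
    have hsx : s x ≠ x := hfix x hx
    have hdist : ∀ i j, i < l → j < l → i ≠ j → s^[i] x ≠ s^[j] x :=
      fun i j hi hj hne h => hne (hfree x hsx i j hi hj h)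
    have hA : ∀ i j : ℕ, i < l → j < l → i ≠ j →
        ∃ A : Set X, IsClopen A ∧ s^[i] x ∈ A ∧ s^[j] x ∉ A := by
      intro i j hi hj hne
      obtain ⟨A, hA1, hA2, hA3⟩ := exists_isClopen_of_totally_separated (hdist i j hi hj hne)
      exact ⟨A, hA1, hA2, hA3⟩
    choose! A hAclopen hAmem hAnot using hA
    set W : ℕ → Set X := fun i => ⋂ j ∈ (Finset.range l).erase i, (A i j ∩ (A j i)ᶜ) with hW
    have hWclopen : ∀ i, i < l → IsClopen (W i) := by
      intro i hi
      apply isClopen_biInter_finset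
      intro j hj
      obtain ⟨hj1, hj2⟩ := Finset.mem_erase.mp hj
      have hj2' := Finset.mem_range.mp hj2
      exact (hAclopen i j hi hj2' (Ne.symm hj1)).inter (hAclopen j i hj2' hi hj1).compl
    have hWmem : ∀ i, i < l → s^[i] x ∈ W i := by
      intro i hi
      apply Set.mem_iInter₂.mpr
      intro j hj
      obtain ⟨hj1, hj2⟩ := Finset.mem_erase.mp hj
      have hj2' := Finset.mem_range.mp hj2
      exact ⟨hAmem i j hi hj2' (Ne.symm hj1), hAnot j i hj2' hi hj1⟩
    have hWdisj : ∀ i j, i < l → j < l → i ≠ j → ∀ z, z ∈ W i → z ∈ W j → False := by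
      intro i j hi hj hne z hzi hzj
      have h1 : z ∈ A i j ∩ (A j i)ᶜ :=
        Set.mem_iInter₂.mp hzi j (Finset.mem_erase.mpr ⟨Ne.symm hne, Finset.mem_range.mpr hj⟩)
      have h2 : z ∈ A j i ∩ (A i j)ᶜ :=
        Set.mem_iInter₂.mp hzj i (Finset.mem_erase.mpr ⟨hne, Finset.mem_range.mpr hi⟩)
      exact h2.2 h1.1
    refine ⟨⋂ i ∈ Finset.range l, s^[i] ⁻¹' (W i), ?_, ?_, ?_⟩
    · apply isClopen_biInter_finset
      intro i hi
      exact (hWclopen i (Finset.mem_range.mp hi)).preimage (hscont.iterate i)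
    · apply Set.mem_iInter₂.mpr
      intro i hi
      exact hWmem i (Finset.mem_range.mp hi)
    · have hP : ∀ z a b, a < b → b < l →
          z ∈ ⋂ i ∈ Finset.range l, s^[i] ⁻¹' (W i) →
          s^[b - a] z ∈ ⋂ i ∈ Finset.range l, s^[i] ⁻¹' (W i) → False := by
        intro z a b hab hb hza hzb
        have h1 : s^[b - a] z ∈ W (b - a) := by
          have := Set.mem_iInter₂.mp hza (b - a) (Finset.mem_range.mpr (by omega))
          exact this
        have h0 : s^[b - a] z ∈ W 0 := by
          have := Set.mem_iInter₂.mp hzb 0 (Finset.mem_range.mpr hlpos)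
          rwa [Set.mem_preimage, Function.iterate_zero_apply] at this
        exact hWdisj 0 (b - a) hlpos (by omega) (by omega) _ h0 h1
      intro z a b ha hb haz hbz
      rcases Nat.lt_trichotomy a b with h | h | h
      · exfalso
        apply hP (s^[a] z) a b h hb haz
        have h2 : s^[b - a] (s^[a] z) = s^[b] z := by
          rw [← Function.iterate_add_apply]
          congr 1
          omega
        rwa [h2]
      · exact h
      · exfalso
        apply hP (s^[b] z) b a h ha hbz
        have h2 : s^[a - b] (s^[b] z) = s^[a] z := by
          rw [← Function.iterate_add_apply]
          congr 1
          omega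
        rwa [h2]
  choose! Uof hUclopen hUmem hUP using hUx
  obtain ⟨t, ht⟩ := hKcpt.elim_finite_subcover (fun x : Kphi => Uof x)
    (fun x => (hUclopen x x.2).isOpen)
    (fun y hy => Set.mem_iUnion.mpr ⟨⟨y, hy⟩, hUmem y hy⟩)
  set L : List (Set X) := t.toList.map (fun z : {x // x ∈ Kphi} => Uof z.val) with hL
  have hLprop : ∀ U ∈ L, IsClopen U ∧
      ∀ z a b, a < l → b < l → s^[a] z ∈ U → s^[b] z ∈ U → a = b := by
    intro U hU
    obtain ⟨z, _, rfl⟩ := List.mem_map.mp hU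
    exact ⟨hUclopen z z.2, hUP z z.2⟩
  have hcover : ∀ y ∈ Kphi, ∃ U ∈ L, y ∈ U := by
    intro y hy
    obtain ⟨i, hi, hyi⟩ := Set.mem_iUnion₂.mp (ht hy)
    exact ⟨Uof ↑i, List.mem_map_of_mem (Finset.mem_toList.mpr hi), hyi⟩
  -- orbit saturation
  set T : Set X → Set X := fun U => ⋃ i ∈ Finset.range l, s^[i] ⁻¹' U with hT
  have hTclopen : ∀ U : Set X, IsClopen U → IsClopen (T U) := by
    intro U hU
    apply isClopen_biUnion_finset
    intro i _
    exact hU.preimage (hscont.iterate i)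
  have hTmem : ∀ (U : Set X) (y : X) (a b : ℕ), a < l → b < l → s^[a] y ∈ U →
      s^[b] y ∈ T U := by
    intro U y a b ha hb hay
    have hm : ((l + a - b) % l + b) % l = a := by
      rw [Nat.mod_add_mod]
      have h1 : l + a - b + b = l + a := by omega
      rw [h1, Nat.add_mod_left, Nat.mod_eq_of_lt ha]
    refine Set.mem_iUnion₂.mpr ⟨(l + a - b) % l, Finset.mem_range.mpr (Nat.mod_lt _ hlpos), ?_⟩
    show s^[(l + a - b) % l] (s^[b] y) ∈ U
    rw [hiter, hm]
    exact hay
  -- the fundamental domain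
  have hDclopen : ∀ M : List (Set X), (∀ U ∈ M, IsClopen U) → IsClopen (fundList T M) := by
    intro M
    induction M with
    | nil => intro _; exact isClopen_empty
    | cons U M' ih =>
      intro hM
      have hU : IsClopen U := hM U List.mem_cons_self
      have hM' : ∀ V ∈ M', IsClopen V := fun V hV => hM V (List.mem_cons_of_mem U hV)
      exact hU.union ((ih hM').diff (hTclopen U hU))
  have hDex : ∀ M : List (Set X), ∀ y : X, (∃ U ∈ M, ∃ i, i < l ∧ s^[i] y ∈ U) →
      ∃ i, i < l ∧ s^[i] y ∈ fundList T M := by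
    intro M
    induction M with
    | nil => intro y ⟨U, hU, _⟩; exact absurd hU List.not_mem_nil
    | cons U M' ih =>
      intro y ⟨V, hV, i, hi, hyi⟩
      by_cases hmeet : ∃ m, m < l ∧ s^[m] y ∈ U
      · obtain ⟨m, hm, hym⟩ := hmeet
        exact ⟨m, hm, Or.inl hym⟩
      · have hVM' : V ∈ M' := by
          rcases List.mem_cons.mp hV with h | h
          · exact absurd ⟨i, hi, h ▸ hyi⟩ hmeet
          · exact h
        obtain ⟨j, hj, hyj⟩ := ih y ⟨V, hVM', i, hi, hyi⟩
        refine ⟨j, hj, Or.inr ⟨hyj, ?_⟩⟩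
        intro hTU
        obtain ⟨m, hm, hym⟩ := Set.mem_iUnion₂.mp hTU
        have hm' := Finset.mem_range.mp hm
        apply hmeet
        refine ⟨(m + j) % l, Nat.mod_lt _ hlpos, ?_⟩
        rw [← hiter]
        exact hym
  have hDuniq : ∀ M : List (Set X),
      (∀ U ∈ M, ∀ z a b, a < l → b < l → s^[a] z ∈ U → s^[b] z ∈ U → a = b) →
      ∀ y a b, a < l → b < l → s^[a] y ∈ fundList T M → s^[b] y ∈ fundList T M → a = b := by
    intro M
    induction M with
    | nil => intro _ y a b _ _ h _; exact absurd h (Set.notMem_empty _)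
    | cons U M' ih =>
      intro hM y a b ha hb hya hyb
      have hPU := hM U List.mem_cons_self
      have hM' : ∀ V ∈ M', ∀ z a b, a < l → b < l → s^[a] z ∈ V → s^[b] z ∈ V → a = b :=
        fun V hV => hM V (List.mem_cons_of_mem U hV)
      rcases hya with hya | hya
      · rcases hyb with hyb | hyb
        · exact hPU y a b ha hb hya hyb
        · exact absurd (hTmem U y a b ha hb hya) hyb.2
      · rcases hyb with hyb | hyb
        · exact absurd (hTmem U y b a hb ha hyb) hya.2
        · exact ih hM' y a b ha hb hya.1 hyb.1
  set D : Set X := fundList T L with hD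
  have hDclopen' : IsClopen D := hDclopen L (fun U hU => (hLprop U hU).1)
  -- the function ψ
  set ψf : X → k := Set.indicator D (φ : X → k) with hψf
  have hψlc : IsLocallyConstant ψf := by
    intro S
    by_cases h0 : (0 : k) ∈ S
    · have heq : ψf ⁻¹' S = (D ∩ (φ : X → k) ⁻¹' S) ∪ Dᶜ := by
        ext y
        by_cases hy : y ∈ D <;> simp [hψf, Set.indicator, hy, h0]
      rw [heq]
      exact (hDclopen'.isOpen.inter (hφlc S)).union hDclopen'.compl.isOpen
    · have heq : ψf ⁻¹' S = D ∩ (φ : X → k) ⁻¹' S := by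
        ext y
        by_cases hy : y ∈ D <;> simp [hψf, Set.indicator, hy, h0]
      rw [heq]
      exact hDclopen'.isOpen.inter (hφlc S)
  have hψsupp : Function.support ψf ⊆ Kphi := by
    intro y hy
    simp only [Function.mem_support] at hy
    intro h0
    apply hy
    simp [hψf, Set.indicator_apply, h0]
  have hψcs : HasCompactSupport ψf := by
    refine hKcpt.of_isClosed_subset isClosed_closure ?_
    calc closure (Function.support ψf) ⊆ closure Kphi := closure_mono hψsupp
      _ = Kphi := hKclosed.closure_eq
  set ψ : Ccinf X k := ⟨ψf, hψlc, hψcs⟩ with hψ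
  -- iterated action
  have hpow : ∀ (i : ℕ) (f : Ccinf X k) (y : X),
      (((gammaT γ ^ i : Module.End k (Ccinf X k)) f : Ccinf X k) : X → k) y
        = (f : X → k) (s^[i] y) := by
    intro i
    induction i with
    | zero => intro f y; rfl
    | succ n ih =>
      intro f y
      rw [pow_succ, Module.End.mul_apply, ih (gammaT γ f) y, Function.iterate_succ_apply']
      rfl
  have hIpow : ∀ (i : ℕ) (f : Ccinf X k), I ((gammaT γ ^ i : Module.End k (Ccinf X k)) f) = I f := by
    intro i
    induction i with
    | zero => intro f; rw [pow_zero]; rfl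
    | succ n ih =>
      intro f
      rw [pow_succ, Module.End.mul_apply, ih (gammaT γ f), hI]
  -- the main identity: φ = N ψ
  have hmain : φ = ∑ i ∈ Finset.range l, (gammaT γ ^ i : Module.End k (Ccinf X k)) ψ := by
    apply Subtype.ext
    rw [AddSubmonoidClass.coe_finset_sum]
    funext y
    rw [Finset.sum_apply]
    have hterm : ∀ i ∈ Finset.range l,
        (((gammaT γ ^ i : Module.End k (Ccinf X k)) ψ : Ccinf X k) : X → k) y = ψf (s^[i] y) :=
      fun i _ => hpow i ψ y
    rw [Finset.sum_congr rfl hterm]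
    by_cases hy : (φ : X → k) y = 0
    · rw [hy]
      symm
      apply Finset.sum_eq_zero
      intro i _
      by_cases hDi : s^[i] y ∈ D
      · rw [hψf, Set.indicator_of_mem hDi, hφsi i y]
        exact hy
      · exact Set.indicator_of_notMem hDi _
    · obtain ⟨V, hVL, hyV⟩ := hcover y hy
      obtain ⟨i0, hi0, hD0⟩ := hDex L y ⟨V, hVL, 0, hlpos, by
        rwa [Function.iterate_zero_apply]⟩
      rw [← hD] at hD0
      have hz : ∀ j ∈ Finset.range l, j ≠ i0 → ψf (s^[j] y) = 0 := by
        intro j hj hne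
        apply Set.indicator_of_notMem
        intro hDj
        exact hne (hDuniq L (fun U hU => (hLprop U hU).2) y j i0
          (Finset.mem_range.mp hj) hi0 hDj hD0)
      rw [Finset.sum_eq_single_of_mem i0 (Finset.mem_range.mpr hi0) hz, hψf,
        Set.indicator_of_mem hD0, hφsi i0 y]
  rw [hmain, map_sum]
  have hconst : ∀ i ∈ Finset.range l,
      I ((gammaT γ ^ i : Module.End k (Ccinf X k)) ψ) = I ψ := fun i _ => hIpow i ψ
  rw [Finset.sum_congr rfl hconst, Finset.sum_const, Finset.card_range, nsmul_eq_mul,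
    CharP.cast_eq_zero k l, zero_mul]
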